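/- Let n, k be positive integers and r a nonnegative integer with n > 2k and k − 1 = (n−2k)r. Then the odd girth of K_{n,k} equals 2r + 3. -/

import Mathlib

open SimpleGraph

/-- The `r`-fold neighborhood: `nbhd G 0 v = {v}`, `nbhd G (r+1) v = ⋃_{w ∈ nbhd G r v} N(w)`. -/
def nbhd {V : Type*} (G : SimpleGraph V) : ℕ → V → Set V
  | 0, v => {v}
  | r+1, v => {y | ∃ w ∈ nbhd G r v, G.Adj w y}

/-- The Kneser graph on `k`-subsets of `[n]`. -/
def kneser (n k : ℕ) : SimpleGraph {A : Finset (Fin n) // A.card = k} where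
  Adj A B := A ≠ B ∧ Disjoint A.1 B.1
  symm := ⟨by rintro A B ⟨h1, h2⟩; exact ⟨h1.symm, h2.symm⟩⟩
  loopless := ⟨by rintro A ⟨h, _⟩; exact h rfl⟩

/-- The odd girth of a graph, as an extended natural number. -/
noncomputable def oddGirth {V : Type*} (G : SimpleGraph V) : ℕ∞ :=
  sInf ((↑) '' {l : ℕ | Odd l ∧ ∃ v : V, ∃ w : G.Walk v v, w.length = l})

/-- The cycle graph on `ZMod m`. -/
def cyc (m : ℕ) : SimpleGraph (ZMod m) where
  Adj x y := x ≠ y ∧ (y = x + 1 ∨ x = y + 1)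
  symm := ⟨by rintro x y ⟨h1, h2⟩; exact ⟨h1.symm, h2.symm⟩⟩
  loopless := ⟨fun x h => h.1 rfl⟩

/-- The `r`-neighborhood complex of `G`, as a set of finite subsets of vertices. -/
def nComplex {V : Type*} (G : SimpleGraph V) (r : ℕ) : Set (Finset V) :=
  {σ | ∃ v : V, ↑σ ⊆ nbhd G r v}
def emb (n : ℕ) (hn : 0 < n) (m : ℕ) : Fin n := ⟨m % n, Nat.mod_lt _ hn⟩

lemma emb_eq_iff {n : ℕ} (hn : 0 < n) {x y : ℕ} :
    emb n hn x = emb n hn y ↔ x % n = y % n := by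
  simp [emb, Fin.ext_iff]

def arc (n : ℕ) (hn : 0 < n) (k a : ℕ) : Finset (Fin n) :=
  (Finset.range k).image (fun j => emb n hn (a + j))

lemma card_arc {n : ℕ} (hn : 0 < n) {k : ℕ} (hkn : k ≤ n) (a : ℕ) :
    (arc n hn k a).card = k := by
  rw [arc, Finset.card_image_of_injOn, Finset.card_range]
  intro i hi j hj hij
  simp only [Finset.mem_coe, Finset.mem_range] at hi hj
  rw [emb_eq_iff] at hij
  have h2 : i % n = j % n := Nat.ModEq.add_left_cancel' a hij
  rwa [Nat.mod_eq_of_lt (lt_of_lt_of_le hi hkn),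
    Nat.mod_eq_of_lt (lt_of_lt_of_le hj hkn)] at h2

lemma disjoint_arc {n : ℕ} (hn : 0 < n) {k s : ℕ} (hs1 : k ≤ s)
    (hs2 : s + k ≤ n) (a : ℕ) : Disjoint (arc n hn k a) (arc n hn k (a + s)) := by
  rw [Finset.disjoint_left]
  rintro x hx hx'
  simp only [arc, Finset.mem_image, Finset.mem_range] at hx hx'
  obtain ⟨i, hi, rfl⟩ := hx
  obtain ⟨j, hj, hji⟩ := hx'
  rw [emb_eq_iff] at hji
  have h2 : (s + j) % n = i % n := Nat.ModEq.add_left_cancel' a (by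
    exact (by simpa [add_assoc] using hji : (a + (s + j)) % n = (a + i) % n))
  rw [Nat.mod_eq_of_lt (by omega), Nat.mod_eq_of_lt (by omega)] at h2
  omega

lemma arc_congr {n : ℕ} (hn : 0 < n) {k a b : ℕ} (hab : a % n = b % n) :
    arc n hn k a = arc n hn k b := by
  unfold arc
  apply Finset.image_congr
  intro j _
  rw [emb_eq_iff]
  exact Nat.ModEq.add_right j hab

lemma walk_of_fn {V : Type*} (G : SimpleGraph V) (A : ℕ → V) :
    ∀ m : ℕ, (∀ i < m, G.Adj (A i) (A (i+1))) → ∃ w : G.Walk (A 0) (A m), w.length = m := by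
  intro m
  induction m with
  | zero => exact fun _ => ⟨Walk.nil, rfl⟩
  | succ m ih =>
    intro hadj
    obtain ⟨w, hw⟩ := ih (fun i hi => hadj i (Nat.lt_succ_of_lt hi))
    exact ⟨w.concat (hadj m (Nat.lt_succ_self m)), by simp [Walk.length_concat, hw]⟩

lemma indep_card_le (t : ℕ) (S : Finset ℕ) (hS : S ⊆ Finset.range (2*t+1))
    (hind : ∀ i ∈ S, (i+1) % (2*t+1) ∉ S) : S.card ≤ t := by
  set l := 2*t+1 with hl
  have hlpos : 0 < l := by omega
  have key : ∀ i < l, (i+1) % l = if i + 1 = l then 0 else i + 1 := by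
    intro i hi
    by_cases hil : i + 1 = l
    · simp [hil]
    · simp [hil, Nat.mod_eq_of_lt (show i+1 < l by omega)]
  set S' := S.image (fun i => (i+1) % l) with hS'
  have hS'sub : S' ⊆ Finset.range l := by
    intro x hx
    simp only [hS', Finset.mem_image] at hx
    obtain ⟨i, _, rfl⟩ := hx
    exact Finset.mem_range.mpr (Nat.mod_lt _ hlpos)
  have hdisj : Disjoint S S' := by
    rw [Finset.disjoint_left]
    rintro x hx hx'
    simp only [hS', Finset.mem_image] at hx'
    obtain ⟨i, hi, rfl⟩ := hx'
    exact hind i hi hx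
  have hcard' : S'.card = S.card := by
    rw [hS']
    apply Finset.card_image_of_injOn
    intro i hi j hj hij
    have hi' := Finset.mem_range.mp (hS hi)
    have hj' := Finset.mem_range.mp (hS hj)
    simp only [] at hij
    rw [key i hi', key j hj'] at hij
    split_ifs at hij <;> omega
  have hun : (S ∪ S').card ≤ l := by
    calc (S ∪ S').card ≤ (Finset.range l).card :=
          Finset.card_le_card (Finset.union_subset hS hS'sub)
    _ = l := Finset.card_range l
  rw [Finset.card_union_of_disjoint hdisj, hcard'] at hun
  omega

/-- If `n > 2k` and `k - 1 = (n-2k)r` then the odd girth of `K_{n,k}` equals `2r + 3`. -/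
theorem stmt_3 (n k r : ℕ) (hk : 0 < k) (h : 2 * k < n) (hr : k - 1 = (n - 2 * k) * r) :
    oddGirth (kneser n k) = ((2 * r + 3 : ℕ) : ℕ∞) := by
  have hn : 0 < n := by omega
  set d := n - 2 * k with hd
  have hd1 : 1 ≤ d := by omega
  have hn2 : n = 2 * k + d := by omega
  have hkd : k = d * r + 1 := by omega
  -- Lower bound: every odd closed walk has length ≥ 2r+3
  have lower : ∀ l : ℕ, Odd l →
      (∃ v : {A : Finset (Fin n) // A.card = k}, ∃ w : (kneser n k).Walk v v, w.length = l) →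
      2 * r + 3 ≤ l := by
    rintro l ⟨t, ht⟩ ⟨v, w, hlen⟩
    set A : ℕ → Finset (Fin n) := fun i => (w.getVert i).1 with hA
    have hcardA : ∀ i, (A i).card = k := fun i => (w.getVert i).2
    have hdisjA : ∀ i < l, Disjoint (A i) (A (i+1)) := by
      intro i hi
      have hadj : (kneser n k).Adj (w.getVert i) (w.getVert (i+1)) :=
        w.adj_getVert_succ (by omega)
      exact hadj.2
    have hA0 : A l = A 0 := by
      simp only [hA]
      rw [← hlen, SimpleGraph.Walk.getVert_length, SimpleGraph.Walk.getVert_zero]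
    -- Double counting
    have hcount : l * k ≤ n * t := by
      have e1 : ∀ s : Finset (Fin n), s.card = ∑ x : Fin n, if x ∈ s then 1 else 0 := by
        intro s
        rw [← Finset.card_filter]
        congr 1
        ext x
        simp
      have e2 : l * k = ∑ i ∈ Finset.range l, (A i).card := by
        simp [hcardA, mul_comm]
      have e3 : ∑ i ∈ Finset.range l, (A i).card
          = ∑ x : Fin n, ((Finset.range l).filter (fun i => x ∈ A i)).card := by
        calc ∑ i ∈ Finset.range l, (A i).card
            = ∑ i ∈ Finset.range l, ∑ x : Fin n, (if x ∈ A i then 1 else 0) := by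
              exact Finset.sum_congr rfl (fun i _ => e1 (A i))
          _ = ∑ x : Fin n, ∑ i ∈ Finset.range l, (if x ∈ A i then 1 else 0) :=
              Finset.sum_comm
          _ = ∑ x : Fin n, ((Finset.range l).filter (fun i => x ∈ A i)).card := by
              exact Finset.sum_congr rfl (fun x _ => (Finset.card_filter _ _).symm)
      have e4 : ∀ x : Fin n, ((Finset.range l).filter (fun i => x ∈ A i)).card ≤ t := by
        intro x
        apply indep_card_le t
        · rw [← ht]; exact Finset.filter_subset _ _
        · intro i hi hcon
          rw [← ht] at hcon
          simp only [Finset.mem_filter, Finset.mem_range] at hi hcon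
          obtain ⟨hil, hxi⟩ := hi
          by_cases hi1 : i + 1 = l
          · rw [hi1, Nat.mod_self] at hcon
            have hx0 : x ∈ A (i+1) := by rw [hi1, hA0]; exact hcon.2
            exact Finset.disjoint_left.mp (hdisjA i hil) hxi hx0
          · rw [Nat.mod_eq_of_lt (by omega)] at hcon
            exact Finset.disjoint_left.mp (hdisjA i hil) hxi hcon.2
      calc l * k = ∑ x : Fin n, ((Finset.range l).filter (fun i => x ∈ A i)).card := by
            rw [e2, e3]
        _ ≤ ∑ _x : Fin n, t := Finset.sum_le_sum (fun x _ => e4 x)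
        _ = n * t := by simp [mul_comm]
    -- arithmetic
    by_contra hcon
    push_neg at hcon
    have htr : t ≤ r := by omega
    have e5 : 2 * (t * k) + k ≤ 2 * (t * k) + d * t := by
      calc 2 * (t * k) + k = l * k := by rw [ht]; ring
        _ ≤ n * t := hcount
        _ = 2 * (t * k) + d * t := by rw [hn2]; ring
    have e6 : k ≤ d * t := by omega
    have e7 : d * t ≤ d * r := Nat.mul_le_mul_left d htr
    have : k ≤ d * r := le_trans e6 e7
    omega
  -- Upper bound construction
  have upper : ∃ v : {A : Finset (Fin n) // A.card = k},
      ∃ w : (kneser n k).Walk v v, w.length = 2 * r + 3 := by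
    set p : ℕ → ℕ := fun i => if i = 0 then 0 else k * i + (d - 1) with hp
    set A : ℕ → {A : Finset (Fin n) // A.card = k} :=
      fun i => ⟨arc n hn k (p i), card_arc hn (by omega) _⟩ with hAdef
    have hadj : ∀ i < 2 * r + 3, (kneser n k).Adj (A i) (A (i+1)) := by
      intro i _
      have hstep : ∃ s, k ≤ s ∧ s + k ≤ n ∧ p (i+1) = p i + s := by
        by_cases hi0 : i = 0
        · refine ⟨k + (d - 1), by omega, by omega, ?_⟩
          simp only [hp, hi0, if_pos rfl, if_neg (Nat.one_ne_zero)]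
          omega
        · refine ⟨k, le_refl k, by omega, ?_⟩
          simp only [hp, if_neg hi0, if_neg (Nat.succ_ne_zero i)]
          ring
      obtain ⟨s, hs1, hs2, hps⟩ := hstep
      have hdisjoint : Disjoint (A i).1 (A (i+1)).1 := by
        have : (A (i+1)).1 = arc n hn k (p i + s) := by rw [hAdef]; simp only []; rw [hps]
        rw [this]
        exact disjoint_arc hn hs1 hs2 (p i)
      refine ⟨?_, hdisjoint⟩
      intro heq
      rw [heq] at hdisjoint
      rw [disjoint_self] at hdisjoint
      have := (A (i+1)).2
      rw [hdisjoint] at this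
      simp at this
      omega
    obtain ⟨w, hw⟩ := walk_of_fn (kneser n k) A (2 * r + 3) hadj
    have hend : A (2 * r + 3) = A 0 := by
      apply Subtype.ext
      show arc n hn k (p (2 * r + 3)) = arc n hn k (p 0)
      apply arc_congr
      obtain ⟨d', hd'⟩ : ∃ d', d = d' + 1 := ⟨d - 1, by omega⟩
      have hpval : p (2 * r + 3) = (r + 1) * n := by
        have : p (2 * r + 3) = k * (2 * r + 3) + (d - 1) := by
          simp only [hp, if_neg (by omega : 2 * r + 3 ≠ 0)]
        rw [this, hn2, hkd, hd']
        simp only [Nat.add_sub_cancel]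
        ring
      rw [hpval]
      show ((r + 1) * n) % n = p 0 % n
      simp [hp, Nat.mul_mod_left]
    exact ⟨A 0, w.copy rfl hend, by rw [SimpleGraph.Walk.length_copy, hw]⟩
  -- Conclude
  apply IsLeast.csInf_eq
  constructor
  · obtain ⟨v, w, hw⟩ := upper
    exact ⟨2 * r + 3, ⟨⟨r + 1, by ring⟩, v, w, hw⟩, rfl⟩
  · rintro b ⟨l, ⟨hodd, hex⟩, rfl⟩
    exact_mod_cast lower l hodd hex
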